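/- If h is a harmonic homogeneous polynomial of degree l on ℝⁿ, then the function f(t,x) = h(x) · ((1-it)² + ‖x‖²)^{-(l + (n-1)/2)} satisfies the wave equation □f = 0 on ℝ^{1+n}. -/

import Mathlib

open Function

section Aux

noncomputable def uu {n : ℕ} (p : ℝ × (Fin n → ℝ)) : ℂ :=
  (1 - Complex.I * p.1) ^ 2 + ((∑ i, (p.2 i) ^ 2 : ℝ) : ℂ)

lemma uu_re {n : ℕ} (p : ℝ × (Fin n → ℝ)) :
    (uu p).re = 1 - p.1 ^ 2 + ∑ i, (p.2 i) ^ 2 := by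
  simp [uu, pow_two, Complex.mul_re, Complex.mul_im, Complex.sub_re, Complex.sub_im]
  try ring

lemma uu_im {n : ℕ} (p : ℝ × (Fin n → ℝ)) : (uu p).im = -2 * p.1 := by
  simp [uu, pow_two, Complex.mul_re, Complex.mul_im, Complex.sub_re, Complex.sub_im]
  try ring

lemma uu_mem_slitPlane {n : ℕ} (p : ℝ × (Fin n → ℝ)) : uu p ∈ Complex.slitPlane := by
  rw [Complex.mem_slitPlane_iff]
  rcases eq_or_ne p.1 0 with h0 | h0
  · left
    rw [uu_re, h0]
    have : (0:ℝ) ≤ ∑ i, (p.2 i) ^ 2 := Finset.sum_nonneg fun i _ => sq_nonneg _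
    nlinarith
  · right
    rw [uu_im]
    simpa using h0

lemma uu_ne_zero {n : ℕ} (p : ℝ × (Fin n → ℝ)) : uu p ≠ 0 :=
  Complex.slitPlane_ne_zero (uu_mem_slitPlane p)

lemma hasDerivAt_ofReal' (t : ℝ) : HasDerivAt (fun s : ℝ => (s : ℂ)) 1 t := by
  simpa using (hasDerivAt_id t).ofReal_comp

lemma hasDerivAt_w (t : ℝ) :
    HasDerivAt (fun s : ℝ => (1 : ℂ) - Complex.I * s) (-Complex.I) t := by
  simpa using (((hasDerivAt_ofReal' t).const_mul Complex.I).const_sub 1)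

lemma hasDerivAt_uu_t {n : ℕ} (x : Fin n → ℝ) (t : ℝ) :
    HasDerivAt (fun s : ℝ => uu (s, x))
      (-2 * Complex.I * (1 - Complex.I * t)) t := by
  have h1 := (((hasDerivAt_w t).fun_mul (hasDerivAt_w t)).add_const
    ((∑ i, (x i) ^ 2 : ℝ) : ℂ))
  have h2 : (fun s : ℝ => ((1 : ℂ) - Complex.I * s) * (1 - Complex.I * s)
      + ((∑ i, (x i) ^ 2 : ℝ) : ℂ)) = fun s : ℝ => uu (s, x) := by
    funext s
    show _ = (1 - Complex.I * (s:ℝ)) ^ 2 + ((∑ i, (x i) ^ 2 : ℝ) : ℂ)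
    ring
  rw [h2] at h1
  refine h1.congr_deriv ?_
  ring

lemma hasDerivAt_sum_sq {n : ℕ} (x : Fin n → ℝ) (i : Fin n) :
    HasDerivAt (fun s : ℝ => (∑ j, (Function.update x i s j) ^ 2 : ℝ)) (2 * x i) (x i) := by
  have hfun : ∀ s : ℝ, (∑ j, (Function.update x i s j) ^ 2 : ℝ)
      = s ^ 2 + ∑ j ∈ Finset.univ.erase i, (x j) ^ 2 := by
    intro s
    rw [← Finset.add_sum_erase _ _ (Finset.mem_univ i), Function.update_self]
    congr 1
    exact Finset.sum_congr rfl fun j hj => by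
      rw [Function.update_of_ne (Finset.ne_of_mem_erase hj)]
  simp only [hfun]
  simpa using (hasDerivAt_pow 2 (x i)).add_const (∑ j ∈ Finset.univ.erase i, (x j) ^ 2)

lemma hasDerivAt_uu_x {n : ℕ} (t : ℝ) (x : Fin n → ℝ) (i : Fin n) :
    HasDerivAt (fun s : ℝ => uu (t, Function.update x i s)) (((2 * x i : ℝ)) : ℂ) (x i) := by
  have h1 := ((hasDerivAt_sum_sq x i).ofReal_comp).const_add ((1 - Complex.I * t) ^ 2)
  exact h1

lemma hasDerivAt_cpow_comp {g : ℝ → ℂ} {g' : ℂ} {t : ℝ} (hg : HasDerivAt g g' t)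
    (hs : g t ∈ Complex.slitPlane) (c : ℂ) :
    HasDerivAt (fun s => g s ^ c) (c * g t ^ (c - 1) * g') t := by
  have h2 : HasDerivAt ((fun z : ℂ => z ^ c) ∘ g) (c * g t ^ (c - 1) * g') t :=
    (Complex.hasStrictDerivAt_cpow_const (c := c) hs).hasDerivAt.comp t hg
  exact h2

open MvPolynomial in
lemma hasDerivAt_eval_update {n : ℕ} (p : MvPolynomial (Fin n) ℝ) (x : Fin n → ℝ) (i : Fin n) :
    HasDerivAt (fun s => eval (Function.update x i s) p) (eval x (pderiv i p)) (x i) := by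
  induction p using MvPolynomial.induction_on with
  | C a => simpa [pderiv_C] using hasDerivAt_const (x i) (a : ℝ)
  | add p q hp hq => simpa using hp.fun_add hq
  | mul_X p j hp =>
      have hB : HasDerivAt (fun s : ℝ => Function.update x i s j)
          (if j = i then 1 else 0) (x i) := by
        rcases eq_or_ne j i with rfl | hij
        · simpa using (hasDerivAt_id' (x j))
        · rw [if_neg hij]
          simpa [Function.update_of_ne hij] using hasDerivAt_const (x i) (x j)
      have := hp.fun_mul hB
      simp only [Function.update_eq_self] at this
      simp only [eval_mul, eval_X, map_add, map_mul, Derivation.leibniz, pderiv_X,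
        smul_eq_mul]
      refine this.congr_deriv ?_
      rcases eq_or_ne j i with rfl | hij
      · simp [Pi.single_eq_same]; ring
      · simp [Pi.single_eq_of_ne hij, if_neg hij]; ring

open MvPolynomial in
lemma euler_eval {n l : ℕ} (h : MvPolynomial (Fin n) ℝ) (hhom : h.IsHomogeneous l)
    (x : Fin n → ℝ) :
    ∑ i : Fin n, x i * eval x (pderiv i h) = (l : ℝ) * eval x h := by
  have key : ∑ i : Fin n, X i * pderiv i h = (l : ℕ) • h := by
    have hmono : ∀ (i : Fin n) (d : Fin n →₀ ℕ) (a : ℝ),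
        X i * pderiv i (monomial d a) = monomial d (a * d i) := by
      intro i d a
      rw [pderiv_monomial]
      rcases Nat.eq_zero_or_pos (d i) with h0 | h0
      · simp [h0]
      · rw [X, monomial_mul, one_mul]
        have hdd : Finsupp.single i 1 + (d - Finsupp.single i 1) = d := by
          ext j
          rcases eq_or_ne j i with rfl | hij
          · simp only [Finsupp.add_apply, Finsupp.tsub_apply, Finsupp.single_eq_same]
            omega
          · simp [Finsupp.single_eq_of_ne' (Ne.symm hij)]
        rw [hdd]
    conv_lhs => rw [h.as_sum]
    conv_rhs => rw [h.as_sum]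
    rw [Finset.smul_sum]
    simp only [map_sum, Finset.mul_sum]
    rw [Finset.sum_comm]
    refine Finset.sum_congr rfl fun d hd => ?_
    simp only [hmono]
    have hdeg : ∑ i : Fin n, d i = l := by
      have := hhom (MvPolynomial.mem_support_iff.mp hd)
      rw [Finsupp.weight_apply, Finsupp.sum_fintype] at this
      · simpa using this
      · intro _; simp
    have : ∑ i : Fin n, monomial d (coeff d h * d i) = monomial d (coeff d h * l) := by
      rw [← map_sum, ← Finset.mul_sum, ← Nat.cast_sum, hdeg]
    rw [this, MvPolynomial.smul_monomial]
    congr 1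
    push_cast
    ring
  have := congrArg (MvPolynomial.eval x) key
  simp only [map_sum, eval_mul, eval_X, smul_eq_mul] at this
  simpa using this

end Aux

noncomputable def pt {n : ℕ} (f : ℝ × (Fin n → ℝ) → ℂ) (p : ℝ × (Fin n → ℝ)) : ℂ :=
  deriv (fun s => f (s, p.2)) p.1

noncomputable def px {n : ℕ} (i : Fin n) (f : ℝ × (Fin n → ℝ) → ℂ) (p : ℝ × (Fin n → ℝ)) : ℂ :=
  deriv (fun s => f (p.1, Function.update p.2 i s)) (p.2 i)

/-- The wave operator `□ = -∂_t² + Σᵢ ∂_{xᵢ}²`. -/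
noncomputable def Box (n : ℕ) (f : ℝ × (Fin n → ℝ) → ℂ) : ℝ × (Fin n → ℝ) → ℂ :=
  fun p => -pt (pt f) p + ∑ i, px i (px i f) p

open MvPolynomial in
/-- If `h` is a harmonic polynomial on `ℝⁿ`, homogeneous of degree `l`, then
`f(t,x) = h(x)·((1-it)² + ‖x‖²)^{-(l+(n-1)/2)}` solves the wave equation. -/
theorem harmonic_times_power_solution (n l : ℕ) (hn : 2 ≤ n)
    (h : MvPolynomial (Fin n) ℝ) (hhom : h.IsHomogeneous l)
    (hharm : ∑ i : Fin n, pderiv i (pderiv i h) = 0) :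
    let f : ℝ × (Fin n → ℝ) → ℂ := fun p =>
      ((eval p.2 h : ℝ) : ℂ) *
        ((1 - Complex.I * p.1) ^ 2 + ((∑ i, (p.2 i) ^ 2 : ℝ) : ℂ))
          ^ (-((l : ℂ) + ((n : ℂ) - 1) / 2))
    ∀ p, Box n f p = 0 := by
  intro f p
  obtain ⟨t, x⟩ := p
  classical
  set c : ℂ := -((l : ℂ) + ((n : ℂ) - 1) / 2) with hc
  have hf : ∀ q : ℝ × (Fin n → ℝ), f q = ((eval q.2 h : ℝ) : ℂ) * (uu q) ^ c :=
    fun q => rfl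
  -- first time derivative
  have hdt : ∀ (t : ℝ) (x : Fin n → ℝ),
      HasDerivAt (fun s : ℝ => f (s, x))
        (((eval x h : ℝ) : ℂ) *
          (c * uu (t, x) ^ (c - 1) * (-2 * Complex.I * (1 - Complex.I * t)))) t := by
    intro t x
    have h0 : (fun s : ℝ => uu (s, x)) t ∈ Complex.slitPlane := uu_mem_slitPlane (t, x)
    have h1 := (hasDerivAt_cpow_comp (hasDerivAt_uu_t x t) h0 c).const_mul
      ((eval x h : ℝ) : ℂ)
    simpa only [hf] using h1
  have hpt1 : ∀ q : ℝ × (Fin n → ℝ), pt f q =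
      ((eval q.2 h : ℝ) : ℂ) *
        (c * uu q ^ (c - 1) * (-2 * Complex.I * (1 - Complex.I * q.1))) :=
    fun q => (hdt q.1 q.2).deriv
  -- second time derivative
  have e1 : pt (pt f) (t, x) =
      -2 * c * ((eval x h : ℝ) : ℂ) * uu (t, x) ^ (c - 1)
        - 4 * c * (c - 1) * ((eval x h : ℝ) : ℂ) * (1 - Complex.I * t) ^ 2 *
            uu (t, x) ^ (c - 1 - 1) := by
    have hfun : (fun s : ℝ => pt f (s, x)) =
        fun s : ℝ => (((eval x h : ℝ) : ℂ) * c * (-2 * Complex.I)) *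
          ((1 - Complex.I * s) * uu (s, x) ^ (c - 1)) := by
      funext s
      rw [hpt1 (s, x)]
      ring
    have h0 : (fun s : ℝ => uu (s, x)) t ∈ Complex.slitPlane := uu_mem_slitPlane (t, x)
    have h1 := hasDerivAt_cpow_comp (hasDerivAt_uu_t x t) h0 (c - 1)
    have h2 := ((hasDerivAt_w t).fun_mul h1).const_mul
      (((eval x h : ℝ) : ℂ) * c * (-2 * Complex.I))
    have hcalc : pt (pt f) (t, x) = deriv (fun s : ℝ => pt f (s, x)) t := rfl
    rw [hcalc, hfun, h2.deriv]
    linear_combination (2 * ((eval x h : ℝ) : ℂ) * c * uu (t, x) ^ (c - 1)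
      + 4 * ((eval x h : ℝ) : ℂ) * c * (c - 1) * uu (t, x) ^ (c - 1 - 1)
          * (1 - Complex.I * t) ^ 2) * Complex.I_sq
  -- first space derivative
  have hdx : ∀ (t : ℝ) (x : Fin n → ℝ) (i : Fin n),
      HasDerivAt (fun s : ℝ => f (t, Function.update x i s))
        (((eval x (pderiv i h) : ℝ) : ℂ) * uu (t, x) ^ c +
          ((eval x h : ℝ) : ℂ) *
            (c * uu (t, x) ^ (c - 1) * ((2 * x i : ℝ) : ℂ))) (x i) := by
    intro t x i
    have hA := (hasDerivAt_eval_update h x i).ofReal_comp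
    have h0 : (fun s : ℝ => uu (t, Function.update x i s)) (x i) ∈ Complex.slitPlane :=
      uu_mem_slitPlane (t, Function.update x i (x i))
    have hB := hasDerivAt_cpow_comp (hasDerivAt_uu_x t x i) h0 c
    have h1 := hA.fun_mul hB
    simp only [Function.update_eq_self] at h1
    simpa only [hf] using h1
  have hpx1 : ∀ (i : Fin n) (q : ℝ × (Fin n → ℝ)), px i f q =
      ((eval q.2 (pderiv i h) : ℝ) : ℂ) * uu q ^ c +
        ((eval q.2 h : ℝ) : ℂ) *
          (c * uu q ^ (c - 1) * ((2 * q.2 i : ℝ) : ℂ)) :=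
    fun i q => (hdx q.1 q.2 i).deriv
  -- second space derivative
  have e2 : ∀ i : Fin n, px i (px i f) (t, x) =
      ((eval x (pderiv i (pderiv i h)) : ℝ) : ℂ) * uu (t, x) ^ c +
        (((x i : ℝ) : ℂ) * ((eval x (pderiv i h) : ℝ) : ℂ)) *
          (4 * c * uu (t, x) ^ (c - 1)) +
        ((eval x h : ℝ) : ℂ) * (2 * c * uu (t, x) ^ (c - 1)) +
        (((x i : ℝ) : ℂ)) ^ 2 *
          (((eval x h : ℝ) : ℂ) * (4 * c * (c - 1) * uu (t, x) ^ (c - 1 - 1))) := by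
    intro i
    have hfun : (fun s : ℝ => px i f (t, Function.update x i s)) =
        fun s : ℝ =>
          ((eval (Function.update x i s) (pderiv i h) : ℝ) : ℂ) *
              uu (t, Function.update x i s) ^ c +
            ((eval (Function.update x i s) h : ℝ) : ℂ) *
              ((c * uu (t, Function.update x i s) ^ (c - 1)) * (2 * (s : ℂ))) := by
      funext s
      rw [hpx1 i (t, Function.update x i s)]
      simp only [Function.update_self]
      push_cast
      ring
    have hA2 := (hasDerivAt_eval_update (pderiv i h) x i).ofReal_comp
    have hU := hasDerivAt_uu_x t x i
    have h0 : (fun s : ℝ => uu (t, Function.update x i s)) (x i) ∈ Complex.slitPlane :=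
      uu_mem_slitPlane (t, Function.update x i (x i))
    have hB2 := hasDerivAt_cpow_comp hU h0 c
    have first := hA2.fun_mul hB2
    have hC := (hasDerivAt_eval_update h x i).ofReal_comp
    have hB3 := (hasDerivAt_cpow_comp hU h0 (c - 1)).const_mul c
    have hs2 : HasDerivAt (fun s : ℝ => 2 * (s : ℂ)) 2 (x i) := by
      simpa using (hasDerivAt_ofReal' (x i)).const_mul (2 : ℂ)
    have second := hC.fun_mul (hB3.fun_mul hs2)
    have htot := first.fun_add second
    simp only [Function.update_eq_self] at htot
    have hcalc : px i (px i f) (t, x)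
        = deriv (fun s : ℝ => px i f (t, Function.update x i s)) (x i) := rfl
    rw [hcalc, hfun, htot.deriv]
    push_cast
    ring
  -- assemble
  have hQ : ∑ i : Fin n, ((eval x (pderiv i (pderiv i h)) : ℝ) : ℂ) = 0 := by
    have := congrArg (MvPolynomial.eval x) hharm
    simp only [map_sum, map_zero] at this
    rw [← Complex.ofReal_sum, this, Complex.ofReal_zero]
  have hE : ∑ i : Fin n, (((x i : ℝ) : ℂ) * ((eval x (pderiv i h) : ℝ) : ℂ)) =
      (l : ℂ) * ((eval x h : ℝ) : ℂ) := by
    have heu := euler_eval h hhom x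
    calc ∑ i : Fin n, (((x i : ℝ) : ℂ) * ((eval x (pderiv i h) : ℝ) : ℂ))
        = ((∑ i : Fin n, x i * eval x (pderiv i h) : ℝ) : ℂ) := by push_cast; ring
      _ = (l : ℂ) * ((eval x h : ℝ) : ℂ) := by rw [heu]; push_cast; ring
  have hS : ∑ i : Fin n, (((x i : ℝ) : ℂ)) ^ 2 = ((∑ i, (x i) ^ 2 : ℝ) : ℂ) := by
    push_cast; ring
  have hBox : Box n f (t, x) = -pt (pt f) (t, x) + ∑ i, px i (px i f) (t, x) := rfl
  rw [hBox, e1]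
  rw [Finset.sum_congr rfl fun i _ => e2 i]
  rw [Finset.sum_add_distrib, Finset.sum_add_distrib, Finset.sum_add_distrib,
    ← Finset.sum_mul, ← Finset.sum_mul, hQ, hE, Finset.sum_const, Finset.card_univ,
    Fintype.card_fin, ← Finset.sum_mul, hS]
  have hup : uu (t, x) = (1 - Complex.I * t) ^ 2 + ((∑ i, (x i) ^ 2 : ℝ) : ℂ) := rfl
  have hU1 : uu (t, x) ^ (c - 1) = uu (t, x) ^ (c - 1 - 1) * uu (t, x) := by
    conv_lhs => rw [show c - 1 = (c - 1 - 1) + 1 by ring]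
    rw [Complex.cpow_add _ _ (uu_ne_zero (t, x)), Complex.cpow_one]
  rw [hU1]
  rw [hc]
  simp only [nsmul_eq_mul, zero_mul, zero_add]
  rw [hup]
  ring
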